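/- arXiv:1702.03277 — 2 statements merged into one kernel-verified Lean document; each statement's English description precedes it below -/
import Mathlib

section
/- Characterization of ℓℓ(D) via selected tokens: let p be a sequence of tokens over a context-free grammar G and local lexing ℓℓ = (Lex, Sel) with input D ∈ Σ*. Then p ∈ ℓℓ(D) if and only if (a) for all i with 0 ≤ i < |p|, the token p_i belongs to 𝒵_{|p̄₀…p̄_{i-1}|}^∞, (b) |p̄| = |D|, and (c) [p] ∈ ℒ. -/
namespace LL
section Defs

/-- A context-free grammar `(𝔑, 𝔗, ℜ, 𝔖)`: nonterminals are the type `N`,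
terminals the type `T` (automatically disjoint), `rules ⊆ 𝔑 × (𝔑 ∪ 𝔗)*`,
and `start ∈ 𝔑`. -/
structure CFG (N T : Type*) where
  rules : Set (N × List (N ⊕ T))
  start : N

variable {N T C : Type*}

/-- One derivation step `α ⇒ β`. -/
def CFG.Step (G : CFG N T) (α β : List (N ⊕ T)) : Prop :=
  ∃ a A b γ, α = a ++ Sum.inl A :: b ∧ β = a ++ γ ++ b ∧ (A, γ) ∈ G.rules

/-- `⇒*`, the reflexive transitive closure of `⇒`. -/
def CFG.Derives (G : CFG N T) : List (N ⊕ T) → List (N ⊕ T) → Prop :=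
  Relation.ReflTransGen G.Step

/-- `ℒ = { w ∈ 𝔗* | 𝔖 ⇒* w }`. -/
def CFG.lang (G : CFG N T) : Set (List T) :=
  {w | G.Derives [Sum.inl G.start] (w.map Sum.inr)}

/-- `ℒ_prefix = { w ∈ 𝔗* | ∃ α. 𝔖 ⇒* w α }`. -/
def CFG.langPrefix (G : CFG N T) : Set (List T) :=
  {w | ∃ α, G.Derives [Sum.inl G.start] (w.map Sum.inr ++ α)}

/-- A token is a pair `(t, c) ∈ 𝔗 × Σ*`. -/
abbrev Token (T C : Type*) := T × List C

/-- `p̄`, the characters of a token sequence. -/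
def chars (p : List (Token T C)) : List C := (p.map Prod.snd).flatten

/-- `[p]`, the terminals of a token sequence. -/
def terms (p : List (Token T C)) : List T := p.map Prod.fst

/-- `limit f X = ⋃ n, fⁿ(X)`. -/
def limit {α : Type*} (f : Set α → Set α) (X : Set α) : Set α := ⋃ n, f^[n] X

/-- A local lexing `(Lex, Sel)` with respect to terminals `T` and characters `C`. -/
structure LocalLexing (T C : Type*) where
  Lex : T → List C → ℕ → Set (Token T C)
  Sel : Set (Token T C) → Set (Token T C) → Set (Token T C)
  lex_sound : ∀ t D k, ∀ x ∈ Lex t D k,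
      x.1 = t ∧ k + x.2.length ≤ D.length ∧ x.2 <+: D.drop k
  sel_sound : ∀ A B : Set (Token T C), A ⊆ B → A ⊆ Sel A B ∧ Sel A B ⊆ B

variable (G : CFG N T) (ll : LocalLexing T C) (D : List C)

/-- `𝒳ₖ = { x | x ∈ Lex([x])(D, k) }`. -/
def Xtok (k : ℕ) : Set (Token T C) := {x | x ∈ ll.Lex x.1 D k}

/-- `𝒲` of a path set `P` at position `k`:
`{ x ∈ 𝒳ₖ | ∃ p ∈ P. |p̄| = k ∧ [p x] ∈ ℒ_prefix }`. -/
def Wtok (P : Set (List (Token T C))) (k : ℕ) : Set (Token T C) :=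
  {x | x ∈ Xtok ll D k ∧ ∃ p ∈ P, (chars p).length = k ∧ terms (p ++ [x]) ∈ G.langPrefix}

/-- `Appendₖ T P = P ∪ { p t | p ∈ P ∧ |p̄| = k ∧ t ∈ T ∧ [p t] ∈ ℒ_prefix }`. -/
def Append (k : ℕ) (Ts : Set (Token T C)) (P : Set (List (Token T C))) :
    Set (List (Token T C)) :=
  P ∪ {q | ∃ p ∈ P, ∃ t ∈ Ts, q = p ++ [t] ∧ (chars p).length = k ∧ terms q ∈ G.langPrefix}

/-- The pair `(𝒫ₖᵘ, 𝒵ₖᵘ)`, starting from the path set `P₀` at position `k`: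
`𝒵ₖ⁰ = ∅`, `𝒵ₖᵘ⁺¹ = Sel(𝒵ₖᵘ, 𝒲ₖᵘ⁺¹)` and `𝒫ₖᵘ⁺¹ = limit (Appendₖ 𝒵ₖᵘ⁺¹) 𝒫ₖᵘ`. -/
def Pstage (k : ℕ) (P₀ : Set (List (Token T C))) :
    ℕ → Set (List (Token T C)) × Set (Token T C)
  | 0 => (P₀, ∅)
  | u + 1 =>
      let PZ := Pstage k P₀ u
      let Z := ll.Sel PZ.2 (Wtok G ll D PZ.1 k)
      (limit (Append G k Z) PZ.1, Z)

/-- `𝒫ₖ⁰`:  `𝒫₀⁰ = {ε}` and `𝒫ₖ₊₁⁰ = 𝒫ₖ^∞`. -/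
def Pinit : ℕ → Set (List (Token T C))
  | 0 => {[]}
  | k + 1 => ⋃ u, (Pstage G ll D k (Pinit k) u).1

/-- The path sets `𝒫ₖᵘ`. -/
def Pset (k u : ℕ) : Set (List (Token T C)) := (Pstage G ll D k (Pinit G ll D k) u).1

/-- The selected token sets `𝒵ₖᵘ`. -/
def Zset (k u : ℕ) : Set (Token T C) := (Pstage G ll D k (Pinit G ll D k) u).2

/-- The admissible token sets `𝒲ₖᵘ`. -/
def Wset (k u : ℕ) : Set (Token T C) := Wtok G ll D (Pset G ll D k u) k

/-- `𝒵ₖ^∞ = ⋃ u, 𝒵ₖᵘ`. -/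
def Zinf (k : ℕ) : Set (Token T C) := ⋃ u, Zset G ll D k u

/-- `𝕻 = 𝒫_{|D|}^∞`. -/
def PP : Set (List (Token T C)) := ⋃ u, Pset G ll D D.length u

/-- `ℓℓ(D) = { p ∈ 𝕻 | |p̄| = |D| ∧ [p] ∈ ℒ }`. -/
def sem : Set (List (Token T C)) :=
  {p | p ∈ PP G ll D ∧ (chars p).length = D.length ∧ terms p ∈ G.lang}

/-- An Earley item `(lhs → pre • post, origin, bin)`. -/
structure EItem (N T : Type*) where
  lhs : N
  pre : List (N ⊕ T)
  post : List (N ⊕ T)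
  origin : ℕ
  bin : ℕ

/-- `Init = { (𝔖 → • α, 0, 0) | (𝔖 → α) ∈ ℜ }`. -/
def EInit : Set (EItem N T) :=
  {x | ∃ α, (G.start, α) ∈ G.rules ∧ x = ⟨G.start, [], α, 0, 0⟩}

/-- The `Predict` operator. -/
def Predict (k : ℕ) (I : Set (EItem N T)) : Set (EItem N T) :=
  I ∪ {x | ∃ M γ, (M, γ) ∈ G.rules ∧
        (∃ N' α β i, (⟨N', α, Sum.inl M :: β, i, k⟩ : EItem N T) ∈ I) ∧
        x = ⟨M, [], γ, k, k⟩}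

/-- The `Complete` operator. -/
def Complete (k : ℕ) (I : Set (EItem N T)) : Set (EItem N T) :=
  I ∪ {x | ∃ N' α M β i j γ,
        (⟨N', α, Sum.inl M :: β, i, j⟩ : EItem N T) ∈ I ∧
        (⟨M, γ, [], j, k⟩ : EItem N T) ∈ I ∧
        x = ⟨N', α ++ [Sum.inl M], β, i, k⟩}

/-- The token-based `Scan` operator. -/
def Scan (Ts : Set (Token T C)) (k : ℕ) (I : Set (EItem N T)) : Set (EItem N T) :=
  I ∪ {x | ∃ N' α X c β i, (X, c) ∈ Ts ∧
        (⟨N', α, Sum.inr X :: β, i, k⟩ : EItem N T) ∈ I ∧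
        x = ⟨N', α ++ [Sum.inr X], β, i, k + c.length⟩}

/-- `Tokens T k I = Sel(T, { x | ∃ X N α β i. (N → α • X β, i, k) ∈ I ∧ x ∈ Lex(X)(D, k) })`. -/
def Tokens (Ts : Set (Token T C)) (k : ℕ) (I : Set (EItem N T)) : Set (Token T C) :=
  ll.Sel Ts {x | ∃ X N' α β i, (⟨N', α, Sum.inr X :: β, i, k⟩ : EItem N T) ∈ I ∧
        x ∈ ll.Lex X D k}

/-- `πₖ T I = limit (Scan T k ∘ Complete k ∘ Predict k) I`. -/
def pik (Ts : Set (Token T C)) (k : ℕ) (I : Set (EItem N T)) : Set (EItem N T) :=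
  limit (fun J => Scan Ts k (Complete k (Predict G k J))) I

/-- The pair `(𝔍ₖᵘ, 𝒯ₖᵘ)`, starting from the item set `J₀` at position `k`:
`𝒯ₖ⁰ = ∅`, `𝒯ₖᵘ⁺¹ = Tokens 𝒯ₖᵘ k 𝔍ₖᵘ` and `𝔍ₖᵘ⁺¹ = πₖ 𝒯ₖᵘ⁺¹ 𝔍ₖᵘ`. -/
def Jstage (k : ℕ) (J₀ : Set (EItem N T)) : ℕ → Set (EItem N T) × Set (Token T C)
  | 0 => (J₀, ∅)
  | u + 1 =>
      let JT := Jstage k J₀ u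
      let T' := Tokens ll D JT.2 k JT.1
      (pik G T' k JT.1, T')

/-- `𝔍ₖ⁰`:  `𝔍₀⁰ = π₀ ∅ Init` and `𝔍ₖ₊₁⁰ = πₖ₊₁ ∅ 𝓘ₖ`. -/
def Jinit : ℕ → Set (EItem N T)
  | 0 => pik G (∅ : Set (Token T C)) 0 (EInit G)
  | k + 1 => pik G (∅ : Set (Token T C)) (k + 1) (⋃ u, (Jstage G ll D k (Jinit k) u).1)

/-- The item sets `𝔍ₖᵘ`. -/
def Jset (k u : ℕ) : Set (EItem N T) := (Jstage G ll D k (Jinit G ll D k) u).1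

/-- The token sets `𝒯ₖᵘ`. -/
def Tset (k u : ℕ) : Set (Token T C) := (Jstage G ll D k (Jinit G ll D k) u).2

/-- `𝓘ₖ = ⋃ u, 𝔍ₖᵘ`. -/
def Ibin (k : ℕ) : Set (EItem N T) := ⋃ u, Jset G ll D k u

/-- `𝕴 = 𝓘_{|D|}`. -/
def Items : Set (EItem N T) := Ibin G ll D D.length

/-- An item `(N → α • β, i, j)` is `p`-valid. -/
def pValid (p : List (Token T C)) (x : EItem N T) : Prop :=
  (x.lhs, x.pre ++ x.post) ∈ G.rules ∧
  ∃ u ≤ p.length, ∃ γ,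
    (chars p).length = x.bin ∧
    (chars (p.take u)).length = x.origin ∧
    G.Derives [Sum.inl G.start] ((terms (p.take u)).map Sum.inr ++ Sum.inl x.lhs :: γ) ∧
    G.Derives x.pre ((terms (p.drop u)).map Sum.inr)

/-- `⟨P⟩ = { x | ∃ p ∈ P. x is p-valid }`. -/
def Gen (P : Set (List (Token T C))) : Set (EItem N T) :=
  {x | ∃ p ∈ P, pValid G p x}


section Aux
variable {N T C : Type*} (G : CFG N T) (ll : LocalLexing T C) (D : List C)

lemma self_subset_limit {α : Type*} (f : Set α → Set α) (X : Set α) : X ⊆ limit f X :=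
  fun x hx => Set.mem_iUnion.2 ⟨0, hx⟩

lemma mem_limit_of_mem_iterate {α : Type*} {f : Set α → Set α} {X : Set α} {n : ℕ} {x : α}
    (h : x ∈ f^[n] X) : x ∈ limit f X := Set.mem_iUnion.2 ⟨n, h⟩

lemma Pset_succ (k u : ℕ) :
    Pset G ll D k (u+1) = limit (Append G k (Zset G ll D k (u+1))) (Pset G ll D k u) := rfl

lemma Zset_succ (k u : ℕ) :
    Zset G ll D k (u+1) = ll.Sel (Zset G ll D k u) (Wset G ll D k u) := rfl

lemma Pset_mono (k : ℕ) : Monotone (Pset G ll D k) := by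
  apply monotone_nat_of_le_succ
  intro u
  rw [Pset_succ]
  exact self_subset_limit _ _

lemma Wtok_mono {P Q : Set (List (Token T C))} (h : P ⊆ Q) (k : ℕ) :
    Wtok G ll D P k ⊆ Wtok G ll D Q k := by
  rintro x ⟨hx, p, hp, h1, h2⟩
  exact ⟨hx, p, h hp, h1, h2⟩

lemma Wset_mono (k : ℕ) : Monotone (Wset G ll D k) :=
  fun u v huv => Wtok_mono G ll D (Pset_mono G ll D k huv) k

lemma Zset_subset_Wset (k u : ℕ) : Zset G ll D k u ⊆ Wset G ll D k u := by
  induction u with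
  | zero => intro t ht; exact absurd ht (Set.notMem_empty t)
  | succ u ih =>
    rw [Zset_succ]
    exact ((ll.sel_sound _ _ ih).2).trans (Wset_mono G ll D k (Nat.le_succ u))

lemma Zset_mono (k : ℕ) : Monotone (Zset G ll D k) := by
  apply monotone_nat_of_le_succ
  intro u
  rw [Zset_succ]
  exact (ll.sel_sound _ _ (Zset_subset_Wset G ll D k u)).1

lemma Zset_subset_Zinf (k u : ℕ) : Zset G ll D k u ⊆ Zinf G ll D k :=
  fun t ht => Set.mem_iUnion.2 ⟨u, ht⟩

lemma Pset_subset_Pinit_succ (k u : ℕ) : Pset G ll D k u ⊆ Pinit G ll D (k+1) :=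
  fun p hp => Set.mem_iUnion.2 ⟨u, hp⟩

lemma Pinit_mono : Monotone (Pinit G ll D) := by
  apply monotone_nat_of_le_succ
  intro k
  exact Pset_subset_Pinit_succ G ll D k 0

lemma Pset_le {k K : ℕ} (u : ℕ) (h : k ≤ K) : ∃ v, Pset G ll D k u ⊆ Pset G ll D K v := by
  rcases h.lt_or_eq with h | rfl
  · exact ⟨0, (Pset_subset_Pinit_succ G ll D k u).trans (Pinit_mono G ll D h)⟩
  · exact ⟨u, subset_rfl⟩

/-- Every token of `p` was selected at the position given by the preceding characters. -/
def Good (p : List (Token T C)) : Prop :=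
  ∀ i (hi : i < p.length), p[i] ∈ Zinf G ll D (chars (p.take i)).length

lemma chars_append_singleton (q : List (Token T C)) (t : Token T C) :
    chars (q ++ [t]) = chars q ++ t.2 := by
  simp [chars]

lemma Good_append_elem {k : ℕ} {Z : Set (Token T C)} (hZ : Z ⊆ Zinf G ll D k)
    {X : Set (List (Token T C))} (hX : ∀ p ∈ X, Good G ll D p) :
    ∀ p ∈ Append G k Z X, Good G ll D p := by
  rintro q (hq | ⟨p, hp, t, ht, rfl, hk, -⟩)
  · exact hX _ hq
  · intro i hi
    rcases Nat.lt_or_ge i p.length with h | h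
    · have h2 := hX p hp i h
      rw [List.getElem_append_left h, List.take_append_of_le_length h.le]
      exact h2
    · have hi' : i = p.length := by
        have : i < p.length + 1 := by simpa using hi
        omega
      subst hi'
      simp only [List.getElem_concat_length]
      rw [List.take_left, hk]
      exact hZ ht

lemma Good_limit {k : ℕ} {Z : Set (Token T C)} (hZ : Z ⊆ Zinf G ll D k)
    {X : Set (List (Token T C))} (hX : ∀ p ∈ X, Good G ll D p) :
    ∀ p ∈ limit (Append G k Z) X, Good G ll D p := by
  intro p hp
  rcases Set.mem_iUnion.1 hp with ⟨n, hn⟩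
  clear hp
  induction n generalizing p with
  | zero => exact hX p hn
  | succ n ih =>
    rw [Function.iterate_succ_apply'] at hn
    exact Good_append_elem G ll D hZ (fun q hq => ih q hq) p hn

lemma Good_Pset_of_init {k : ℕ} (h0 : ∀ p ∈ Pinit G ll D k, Good G ll D p) (u : ℕ) :
    ∀ p ∈ Pset G ll D k u, Good G ll D p := by
  induction u with
  | zero => exact h0
  | succ u ih =>
    rw [Pset_succ]
    exact Good_limit G ll D (Zset_subset_Zinf G ll D k (u+1)) ih

lemma Good_Pinit (k : ℕ) : ∀ p ∈ Pinit G ll D k, Good G ll D p := by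
  induction k with
  | zero =>
    intro p hp
    rcases hp with rfl
    intro i hi
    simp at hi
  | succ k ih =>
    intro p hp
    rcases Set.mem_iUnion.1 hp with ⟨u, hu⟩
    exact Good_Pset_of_init G ll D ih u p hu

lemma termsTake_mem_langPrefix {p : List (Token T C)} (h : terms p ∈ G.lang) (n : ℕ) :
    terms (p.take n) ∈ G.langPrefix := by
  refine ⟨((terms p).drop n).map Sum.inr, ?_⟩
  have h1 : terms (p.take n) = (terms p).take n := by
    simp [terms, List.map_take]
  rw [h1, ← List.map_append, List.take_append_drop]
  exact h

lemma mem_Pset_of_good (p : List (Token T C))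
    (hg : ∀ i (hi : i < p.length), p[i] ∈ Zinf G ll D (chars (p.take i)).length)
    (hL : ∀ n, terms (p.take n) ∈ G.langPrefix) :
    ∃ u, p ∈ Pset G ll D (chars p).length u := by
  induction p using List.reverseRecOn with
  | nil => exact ⟨0, rfl⟩
  | append_singleton q t ih =>
    have hq : ∃ u, q ∈ Pset G ll D (chars q).length u := by
      apply ih
      · intro i hi
        have h2 := hg i (by simp; omega)
        rwa [List.getElem_append_left hi, List.take_append_of_le_length hi.le] at h2
      · intro n
        rcases le_or_gt n q.length with h | h
        · have := hL n
          rwa [List.take_append_of_le_length h] at this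
        · have := hL q.length
          rw [List.take_left] at this
          rwa [List.take_of_length_le h.le]
    rcases hq with ⟨v, hv⟩
    have ht : t ∈ Zinf G ll D (chars q).length := by
      have h2 := hg q.length (by simp)
      simp only [List.getElem_concat_length] at h2
      rwa [List.take_left] at h2
    rcases Set.mem_iUnion.1 ht with ⟨w, hw⟩
    have hv' : q ∈ Pset G ll D (chars q).length (max v w) :=
      Pset_mono G ll D _ (le_max_left v w) hv
    have hw' : t ∈ Zset G ll D (chars q).length (max v w + 1) :=
      Zset_mono G ll D _ (le_trans (le_max_right v w) (Nat.le_succ _)) hw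
    have hfull : terms (q ++ [t]) ∈ G.langPrefix := by
      have := hL (q ++ [t]).length
      rwa [List.take_length] at this
    have hmem : q ++ [t] ∈ Pset G ll D (chars q).length (max v w + 1) := by
      rw [Pset_succ]
      apply mem_limit_of_mem_iterate (n := 1)
      rw [Function.iterate_one]
      exact Or.inr ⟨q, hv', t, hw', rfl, rfl, hfull⟩
    have hle : (chars q).length ≤ (chars (q ++ [t])).length := by
      rw [chars_append_singleton]
      simp
    rcases Pset_le G ll D (max v w + 1) hle with ⟨u, hsub⟩
    exact ⟨u, hsub hmem⟩

end Aux

/-- Characterization of `ℓℓ(D)`: `p ∈ ℓℓ(D)` iff (a) every token `pᵢ` of `p` belongs to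
`𝒵_{|p̄₀…p̄ᵢ₋₁|}^∞`, (b) `|p̄| = |D|`, and (c) `[p] ∈ ℒ`. -/
theorem sem_characterization {N T C : Type*} (G : CFG N T) (ll : LocalLexing T C)
    (D : List C) (p : List (Token T C)) :
    p ∈ sem G ll D ↔
      ((∀ i (hi : i < p.length), p[i] ∈ Zinf G ll D (chars (p.take i)).length) ∧
        (chars p).length = D.length ∧ terms p ∈ G.lang) := by
  constructor
  · rintro ⟨hP, hlen, hlang⟩
    refine ⟨?_, hlen, hlang⟩
    rcases Set.mem_iUnion.1 hP with ⟨u, hu⟩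
    exact Good_Pset_of_init G ll D (Good_Pinit G ll D D.length) u p hu
  · rintro ⟨hg, hlen, hlang⟩
    refine ⟨?_, hlen, hlang⟩
    rcases mem_Pset_of_good G ll D p hg (fun n => termsTake_mem_langPrefix G hlang n) with ⟨u, hu⟩
    rw [hlen] at hu
    exact Set.mem_iUnion.2 ⟨u, hu⟩


end Defs
end LL
end

section
/- Token membership invariant: for every context-free grammar G, local lexing ℓℓ = (Lex, Sel), input D ∈ Σ*, position k ∈ {0,…,|D|}, stage u ≥ 0, and every path p ∈ 𝒫ₖ^u, every token p_i of p (0 ≤ i < |p|) satisfies p_i ∈ 𝒳_{|p̄₀…p̄_{i-1}|}; that is, every token occurring in a produced path is lexed by Lex at the position where it occurs. -/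
namespace LL
section Defs

variable {N T C : Type*}

variable (G : CFG N T) (ll : LocalLexing T C) (D : List C)

/-- The invariant: every token of every path in `P` is lexed at its position. -/
def TMInv (ll : LocalLexing T C) (D : List C) (P : Set (List (Token T C))) : Prop :=
  ∀ p ∈ P, ∀ i, (hi : i < p.length) → p[i] ∈ Xtok ll D (chars (p.take i)).length

lemma tminv_append {G : CFG N T} {ll : LocalLexing T C} {D : List C} {k : ℕ}
    {Z : Set (Token T C)} (hZ : Z ⊆ Xtok ll D k)
    {P : Set (List (Token T C))} (hP : TMInv ll D P) :
    TMInv ll D (Append G k Z P) := by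
  rintro q (hq | ⟨p, hp, t, ht, rfl, hlen, -⟩) i hi
  · exact hP q hq i hi
  · rcases lt_or_eq_of_le (Nat.lt_succ_iff.mp (by simpa using hi)) with h | h
    · rw [List.getElem_append_left h, List.take_append_of_le_length h.le]
      exact hP p hp i h
    · subst h
      rw [List.take_append_of_le_length le_rfl, List.take_length,
        List.getElem_concat_length, hlen]
      · exact hZ ht
      · rfl

lemma tminv_limit_append {G : CFG N T} {ll : LocalLexing T C} {D : List C} {k : ℕ}
    {Z : Set (Token T C)} (hZ : Z ⊆ Xtok ll D k)
    {P : Set (List (Token T C))} (hP : TMInv ll D P) :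
    TMInv ll D (limit (Append G k Z) P) := by
  intro p hp
  obtain ⟨n, hn⟩ := Set.mem_iUnion.mp hp
  clear hp
  induction n generalizing p with
  | zero => exact hP p hn
  | succ n ih =>
    rw [Function.iterate_succ_apply'] at hn
    exact tminv_append hZ (fun q hq => ih q hq) p hn


lemma pstage_mono {G : CFG N T} {ll : LocalLexing T C} {D : List C} {k : ℕ}
    {P₀ : Set (List (Token T C))} (u : ℕ) :
    (Pstage G ll D k P₀ u).1 ⊆ (Pstage G ll D k P₀ (u + 1)).1 := by
  intro p hp
  exact Set.mem_iUnion.mpr ⟨0, hp⟩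

lemma wtok_mono {G : CFG N T} {ll : LocalLexing T C} {D : List C} {k : ℕ}
    {P Q : Set (List (Token T C))} (h : P ⊆ Q) :
    Wtok G ll D P k ⊆ Wtok G ll D Q k := by
  rintro x ⟨hx, p, hp, h1, h2⟩
  exact ⟨hx, p, h hp, h1, h2⟩

lemma zstage_sub_wtok {G : CFG N T} {ll : LocalLexing T C} {D : List C} {k : ℕ}
    {P₀ : Set (List (Token T C))} (u : ℕ) :
    (Pstage G ll D k P₀ u).2 ⊆ Wtok G ll D (Pstage G ll D k P₀ u).1 k := by
  induction u with
  | zero => exact Set.empty_subset _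
  | succ u ih =>
    have h := (ll.sel_sound _ _ ih).2
    exact h.trans (wtok_mono (pstage_mono u))

lemma tminv_pstage {G : CFG N T} {ll : LocalLexing T C} {D : List C} {k : ℕ}
    {P₀ : Set (List (Token T C))} (hP : TMInv ll D P₀) (u : ℕ) :
    TMInv ll D (Pstage G ll D k P₀ u).1 := by
  induction u with
  | zero => exact hP
  | succ u ih =>
    have hZ : (Pstage G ll D k P₀ (u + 1)).2 ⊆ Xtok ll D k := by
      refine (zstage_sub_wtok (u + 1)).trans ?_
      rintro x ⟨hx, -⟩
      exact hx
    exact tminv_limit_append hZ ih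

lemma tminv_pinit (G : CFG N T) (ll : LocalLexing T C) (D : List C) (k : ℕ) :
    TMInv ll D (Pinit G ll D k) := by
  induction k with
  | zero =>
    rintro p rfl i hi
    simp at hi
  | succ k ih =>
    intro p hp
    obtain ⟨_, ⟨u, rfl⟩, hu⟩ := hp
    exact tminv_pstage ih u p hu

/-- Token membership invariant: every token occurring in a produced path is lexed by
`Lex` at the position where it occurs: `pᵢ ∈ 𝒳_{|p̄₀…p̄ᵢ₋₁|}` for every `p ∈ 𝒫ₖᵘ`. -/
theorem token_membership {N T C : Type*} (G : CFG N T) (ll : LocalLexing T C)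
    (D : List C) (k : ℕ) (hk : k ≤ D.length) (u : ℕ)
    (p : List (Token T C)) (hp : p ∈ Pset G ll D k u)
    (i : ℕ) (hi : i < p.length) :
    p[i] ∈ Xtok ll D (chars (p.take i)).length := by
  exact tminv_pstage (tminv_pinit G ll D k) u p hp i hi

end Defs
end LL
end
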